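/- Let W be a positive definite real d×d matrix and S a real d×b matrix with b ↦ S·b injective, and set G* = (Sᵀ·W⁻¹·S)⁻¹·Sᵀ·W⁻¹. Then for every real b×d matrix G satisfying the unbiasedness condition G·S = I_b, the matrix S·G·W·Gᵀ·Sᵀ − S·G*·W·G*ᵀ·Sᵀ is positive semidefinite; i.e., G* yields the minimum variance (in the Loewner order) linear unbiased reconciled forecasts when the base forecast error covariance equals W. -/

import Mathlib

open Matrix

/-- **MinT optimality.** With base forecast error covariance `W` (positive definite) and
full-column-rank structural matrix `S`, the choice `G* = (Sᵀ·W⁻¹·S)⁻¹·Sᵀ·W⁻¹` minimizes,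
in the Loewner order, the reconciled error covariance `S·G·W·Gᵀ·Sᵀ` among all `G`
satisfying the unbiasedness condition `G·S = I`. -/
theorem minT_optimality {d b : ℕ}
    (W : Matrix (Fin d) (Fin d) ℝ) (hW : W.PosDef)
    (S : Matrix (Fin d) (Fin b) ℝ) (hS : Function.Injective S.mulVec) :
    let Gstar : Matrix (Fin b) (Fin d) ℝ := (Sᵀ * W⁻¹ * S)⁻¹ * Sᵀ * W⁻¹
    ∀ G : Matrix (Fin b) (Fin d) ℝ, G * S = 1 →
      (S * G * W * Gᵀ * Sᵀ - S * Gstar * W * Gstarᵀ * Sᵀ).PosSemidef := by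
  intro Gstar G hG
  have hdet : IsUnit W.det := (isUnit_iff_isUnit_det W).mp hW.isUnit
  have hWW : W * W⁻¹ = 1 := mul_nonsing_inv W hdet
  have hWW' : W⁻¹ * W = 1 := nonsing_inv_mul W hdet
  have hWsymm : Wᵀ = W := by
    have := hW.isHermitian
    rwa [IsHermitian, conjTranspose_eq_transpose_of_trivial] at this
  have hWinvsymm : W⁻¹ᵀ = W⁻¹ := by
    have := hW.inv.isHermitian
    rwa [IsHermitian, conjTranspose_eq_transpose_of_trivial] at this
  set M := Sᵀ * W⁻¹ * S with hMdef
  have hMsymm : Mᵀ = M := by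
    rw [hMdef, transpose_mul, transpose_mul, transpose_transpose, hWinvsymm, Matrix.mul_assoc]
  have hMpd : M.PosDef := by
    rw [posDef_iff_dotProduct_mulVec]
    constructor
    · rw [IsHermitian, conjTranspose_eq_transpose_of_trivial, hMsymm]
    · intro x hx
      have hSx : S *ᵥ x ≠ 0 := fun h => hx (hS (by simpa using h))
      have hpos := hW.inv.dotProduct_mulVec_pos hSx
      have : star x ⬝ᵥ (M *ᵥ x) = star (S *ᵥ x) ⬝ᵥ (W⁻¹ *ᵥ (S *ᵥ x)) := by
        simp [hMdef, star_trivial, ← mulVec_mulVec, dotProduct_mulVec, vecMul_transpose]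
      rw [this]
      exact hpos
  have hMdet : IsUnit M.det := (isUnit_iff_isUnit_det M).mp hMpd.isUnit
  have hMM : M * M⁻¹ = 1 := mul_nonsing_inv M hMdet
  have hMM' : M⁻¹ * M = 1 := nonsing_inv_mul M hMdet
  have hMinvsymm : M⁻¹ᵀ = M⁻¹ := by rw [transpose_nonsing_inv, hMsymm]
  have hGstarT : Gstarᵀ = W⁻¹ * S * M⁻¹ := by
    show ((Sᵀ * W⁻¹ * S)⁻¹ * Sᵀ * W⁻¹)ᵀ = _
    rw [← hMdef, transpose_mul, transpose_mul, transpose_transpose, hWinvsymm, hMinvsymm,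
      Matrix.mul_assoc]
  have hG1 : Gstar * W * Gstarᵀ = M⁻¹ := by
    show (Sᵀ * W⁻¹ * S)⁻¹ * Sᵀ * W⁻¹ * W * Gstarᵀ = M⁻¹
    rw [← hMdef, hGstarT]
    calc M⁻¹ * Sᵀ * W⁻¹ * W * (W⁻¹ * S * M⁻¹)
        = M⁻¹ * Sᵀ * (W⁻¹ * W * W⁻¹) * S * M⁻¹ := by
          simp only [Matrix.mul_assoc]
      _ = M⁻¹ * (Sᵀ * W⁻¹ * S) * M⁻¹ := by
          rw [hWW', Matrix.one_mul]; simp only [Matrix.mul_assoc]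
      _ = M⁻¹ := by rw [Matrix.mul_assoc, hMM, Matrix.mul_one]
  have hG2 : G * W * Gstarᵀ = M⁻¹ := by
    rw [hGstarT]
    calc G * W * (W⁻¹ * S * M⁻¹)
        = G * (W * W⁻¹) * S * M⁻¹ := by simp only [Matrix.mul_assoc]
      _ = G * S * M⁻¹ := by rw [hWW, Matrix.mul_one]
      _ = M⁻¹ := by rw [hG, Matrix.one_mul]
  have hG3 : Gstar * W * Gᵀ = M⁻¹ := by
    show (Sᵀ * W⁻¹ * S)⁻¹ * Sᵀ * W⁻¹ * W * Gᵀ = M⁻¹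
    rw [← hMdef]
    calc M⁻¹ * Sᵀ * W⁻¹ * W * Gᵀ
        = M⁻¹ * (Sᵀ * (W⁻¹ * W) * Gᵀ) := by simp only [Matrix.mul_assoc]
      _ = M⁻¹ * (Sᵀ * Gᵀ) := by rw [hWW', Matrix.mul_one]
      _ = M⁻¹ * (G * S)ᵀ := by rw [transpose_mul]
      _ = M⁻¹ := by rw [hG, transpose_one, Matrix.mul_one]
  have key : S * G * W * Gᵀ * Sᵀ - S * Gstar * W * Gstarᵀ * Sᵀ
      = (S * (G - Gstar)) * W * (S * (G - Gstar))ᵀ := by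
    have expand : (S * (G - Gstar)) * W * (S * (G - Gstar))ᵀ
        = S * (G * W * Gᵀ) * Sᵀ - S * (G * W * Gstarᵀ) * Sᵀ
          - S * (Gstar * W * Gᵀ) * Sᵀ + S * (Gstar * W * Gstarᵀ) * Sᵀ := by
      simp only [transpose_mul, transpose_sub, Matrix.sub_mul, Matrix.mul_sub,
        Matrix.mul_assoc]
      abel
    rw [expand, hG1, hG2, hG3]
    have h2 : S * Gstar * W * Gstarᵀ * Sᵀ = S * M⁻¹ * Sᵀ := by
      rw [Matrix.mul_assoc S Gstar W, Matrix.mul_assoc S (Gstar * W) _, hG1]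
    rw [h2]
    simp only [Matrix.mul_assoc]
    abel
  rw [key]
  have := hW.posSemidef.mul_mul_conjTranspose_same (S * (G - Gstar))
  rwa [conjTranspose_eq_transpose_of_trivial] at this
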